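/- For every real number t and every integer N ≥ 4, the coefficient a_4(N,t) has the closed form a_4(N, t) = 4!·t^4 · Σ_{j_3=0}^{N-4} Σ_{j_2=0}^{N-j_3-4} Σ_{j_1=0}^{N-j_3-j_2-4} 5^{j_3}·4^{j_2}·3^{j_1}·(2^{N-j_3-j_2-j_1-3} - 1). -/

import Mathlib

/-- The coefficients `a i N t` defined by `a 0 N t = 1` and, for `1 ≤ i ≤ N`,
`a i N t = i * t * ∑_{j=0}^{N-i} (i+1)^j * a (i-1) (N-j-1) t`. -/
noncomputable def eulerianCoeff : ℕ → ℕ → ℝ → ℝ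
  | 0, _, _ => 1
  | (i + 1), N, t =>
      ((i : ℝ) + 1) * t *
        ∑ j ∈ Finset.range (N - (i + 1) + 1),
          ((i : ℝ) + 2) ^ j * eulerianCoeff i (N - j - 1) t

lemma a1 (t : ℝ) (N : ℕ) (h : 1 ≤ N) : eulerianCoeff 1 N t = t * ((2:ℝ) ^ N - 1) := by
  conv_lhs => rw [show (1:ℕ) = 0 + 1 from rfl, eulerianCoeff]
  simp only [eulerianCoeff, mul_one, Nat.cast_zero, zero_add]
  rw [Nat.sub_add_cancel h, geom_sum_eq (by norm_num)]
  ring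

lemma a2 (t : ℝ) (N : ℕ) (h : 2 ≤ N) : eulerianCoeff 2 N t =
    2 * t ^ 2 * ∑ j ∈ Finset.range (N - 2 + 1),
      (3:ℝ) ^ j * ((2:ℝ) ^ (N - j - 1) - 1) := by
  conv_lhs => rw [show (2:ℕ) = 1 + 1 from rfl, eulerianCoeff]
  simp only [Finset.mul_sum]
  apply Finset.sum_congr rfl
  intro j hj
  simp only [Finset.mem_range] at hj
  rw [a1 t (N - j - 1) (by omega)]
  push_cast
  ring

lemma a3 (t : ℝ) (N : ℕ) (h : 3 ≤ N) : eulerianCoeff 3 N t =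
    6 * t ^ 3 * ∑ j₂ ∈ Finset.range (N - 3 + 1), ∑ j₁ ∈ Finset.range (N - j₂ - 3 + 1),
      (4:ℝ) ^ j₂ * (3:ℝ) ^ j₁ * ((2:ℝ) ^ (N - j₂ - j₁ - 2) - 1) := by
  conv_lhs => rw [show (3:ℕ) = 2 + 1 from rfl, eulerianCoeff]
  simp only [Finset.mul_sum]
  apply Finset.sum_congr rfl
  intro j₂ hj₂
  simp only [Finset.mem_range] at hj₂
  rw [a2 t (N - j₂ - 1) (by omega), show N - j₂ - 1 - 2 = N - j₂ - 3 from by omega]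
  simp only [Finset.mul_sum]
  apply Finset.sum_congr rfl
  intro j₁ hj₁
  rw [show N - j₂ - 1 - j₁ - 1 = N - j₂ - j₁ - 2 from by omega]
  push_cast
  ring

theorem eulerianCoeff_four (t : ℝ) (N : ℕ) (hN : 4 ≤ N) :
    eulerianCoeff 4 N t =
      (Nat.factorial 4 : ℝ) * t ^ 4 *
        ∑ j₃ ∈ Finset.range (N - 4 + 1), ∑ j₂ ∈ Finset.range (N - j₃ - 4 + 1),
          ∑ j₁ ∈ Finset.range (N - j₃ - j₂ - 4 + 1),
            (5 : ℝ) ^ j₃ * (4 : ℝ) ^ j₂ * (3 : ℝ) ^ j₁ *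
              ((2 : ℝ) ^ (N - j₃ - j₂ - j₁ - 3) - 1) := by
  conv_lhs => rw [show (4:ℕ) = 3 + 1 from rfl, eulerianCoeff]
  simp only [Finset.mul_sum]
  apply Finset.sum_congr rfl
  intro j₃ hj₃
  simp only [Finset.mem_range] at hj₃
  rw [a3 t (N - j₃ - 1) (by omega), show N - j₃ - 1 - 3 = N - j₃ - 4 from by omega]
  simp only [Finset.mul_sum]
  apply Finset.sum_congr rfl
  intro j₂ hj₂
  rw [show N - j₃ - 1 - j₂ - 3 = N - j₃ - j₂ - 4 from by omega]
  apply Finset.sum_congr rfl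
  intro j₁ hj₁
  rw [show N - j₃ - 1 - j₂ - j₁ - 2 = N - j₃ - j₂ - j₁ - 3 from by omega]
  push_cast [Nat.factorial]
  ring
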